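/- Let f : ℤ → ℤ be a bijection with Lipschitz constants K for f and L for f⁻¹. Then there exists a sign ε ∈ {1, -1} and a constant c ∈ ℤ such that |f(x) - (ε·x + c)| ≤ K·L for all x ∈ ℤ. -/

import Mathlib

/-- Separation: points at distance ≥ K·L+1 have images at distance ≥ K+1. -/
private lemma sep' (f g : ℤ → ℤ) (K L : ℤ)
    (hfg : Function.LeftInverse g f)
    (hLipInv : ∀ u v : ℤ, |g u - g v| ≤ L * |u - v|)
    (hK : 1 ≤ K) (hL : 1 ≤ L) :
    ∀ x y : ℤ, x + (K*L+1) ≤ y → K + 1 ≤ |f y - f x| := by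
  intro x y hxy
  have hKL : 1 ≤ K*L := by nlinarith
  have h1 : |x - y| ≤ L * |f x - f y| := by
    have := hLipInv (f x) (f y); rwa [hfg, hfg] at this
  have h2 : |x - y| = y - x := by
    rw [abs_sub_comm]; exact abs_of_nonneg (by linarith)
  have h3 : |f x - f y| = |f y - f x| := abs_sub_comm _ _
  by_contra h
  push_neg at h
  have h4 : |f y - f x| ≤ K := by linarith
  have h5 : L * |f y - f x| ≤ L * K := mul_le_mul_of_nonneg_left h4 (by linarith)
  rw [h2, h3] at h1
  nlinarith

/-- The relative position of `f y` w.r.t. `f x` is constant for `y ≥ x + K·L+1`. -/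
private lemma iff_top' (f g : ℤ → ℤ) (K L : ℤ)
    (hfg : Function.LeftInverse g f)
    (hLip : ∀ x y : ℤ, |f x - f y| ≤ K * |x - y|)
    (hLipInv : ∀ u v : ℤ, |g u - g v| ≤ L * |u - v|)
    (hK : 1 ≤ K) (hL : 1 ≤ L) :
    ∀ x y : ℤ, x + (K*L+1) ≤ y → (f x < f y ↔ f x < f (x + (K*L+1))) := by
  intro x
  refine Int.le_induction ?_ ?_
  · exact Iff.rfl
  · intro y hy IH
    have A := sep' f g K L hfg hLipInv hK hL x y hy
    have B : |f (y+1) - f y| ≤ K := by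
      have := hLip (y+1) y
      simpa using this
    have key : f x < f (y+1) ↔ f x < f y := by
      constructor
      · intro h
        rcases le_abs.mp A with h2 | h2
        · linarith
        · linarith [abs_le.mp B]
      · intro h
        rcases le_abs.mp A with h2 | h2
        · linarith [(abs_le.mp B).2, (abs_le.mp B).1]
        · linarith [(abs_le.mp B).2, (abs_le.mp B).1]
    rw [key]; exact IH

/-- If f is somewhere coarsely increasing, it is coarsely increasing everywhere. -/
private lemma coarse_mono' (f g : ℤ → ℤ) (K L : ℤ)
    (hfg : Function.LeftInverse g f)
    (hLip : ∀ x y : ℤ, |f x - f y| ≤ K * |x - y|)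
    (hLipInv : ∀ u v : ℤ, |g u - g v| ≤ L * |u - v|)
    (hK : 1 ≤ K) (hL : 1 ≤ L)
    (hpos : ∃ x0 : ℤ, f x0 < f (x0 + (K*L+1))) :
    ∀ x y : ℤ, x + (K*L+1) ≤ y → f x < f y := by
  have step : ∀ x : ℤ, (f x < f (x + (K*L+1))) ↔ (f (x+1) < f (x+1 + (K*L+1))) := by
    intro x
    set y := x + (K*L+1) + 1 with hy
    have h1 : x + (K*L+1) ≤ y := by omega
    have h2 : (x+1) + (K*L+1) ≤ y := by omega
    have A1 := sep' f g K L hfg hLipInv hK hL x y h1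
    have A2 := sep' f g K L hfg hLipInv hK hL (x+1) y h2
    have B : |f (x+1) - f x| ≤ K := by
      have := hLip (x+1) x; simpa using this
    have mid : f x < f y ↔ f (x+1) < f y := by
      constructor
      · intro h
        rcases le_abs.mp A1 with h3 | h3
        · linarith [(abs_le.mp B).2, (abs_le.mp B).1]
        · linarith
      · intro h
        rcases le_abs.mp A1 with h3 | h3
        · linarith
        · linarith [(abs_le.mp B).2, (abs_le.mp B).1]
    have i1 := iff_top' f g K L hfg hLip hLipInv hK hL x y h1
    have i2 := iff_top' f g K L hfg hLip hLipInv hK hL (x+1) y h2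
    rw [← i1, mid, i2]
  have const : ∀ x : ℤ, (f x < f (x + (K*L+1))) ↔ (f 0 < f (0 + (K*L+1))) := by
    intro x
    induction x using Int.induction_on with
    | zero => exact Iff.rfl
    | succ i IH => rw [← step]; exact IH
    | pred i IH =>
        have := step (-(i:ℤ) - 1)
        have e : (-(i:ℤ) - 1) + 1 = -(i:ℤ) := by ring
        rw [e] at this
        rw [this]; exact IH
  obtain ⟨x0, hx0⟩ := hpos
  have all : ∀ x : ℤ, f x < f (x + (K*L+1)) := fun x =>
    (const x).mpr ((const x0).mp hx0)
  intro x y hxy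
  exact (iff_top' f g K L hfg hLip hLipInv hK hL x y hxy).mpr (all x)

/-- Counting: a coarsely increasing bijection increases at most linearly with slope 1. -/
private lemma count' (f g : ℤ → ℤ) (K L : ℤ)
    (hgf : Function.RightInverse g f)
    (mono : ∀ x y : ℤ, x + (K*L+1) ≤ y → f x < f y)
    (hK : 1 ≤ K) (hL : 1 ≤ L) :
    ∀ a b : ℤ, f a ≤ f b → f b - f a ≤ b - a + 2*(K*L) := by
  intro a b hab
  have hKL : 1 ≤ K*L := by nlinarith
  have key : ∀ w ∈ Finset.Icc (f a) (f b), g w ∈ Finset.Icc (a - K*L) (b + K*L) := by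
    intro w hw
    rw [Finset.mem_Icc] at hw ⊢
    constructor
    · by_contra h
      push_neg at h
      have hle : g w + (K*L+1) ≤ a := by omega
      have := mono (g w) a hle
      rw [hgf] at this
      linarith [hw.1]
    · by_contra h
      push_neg at h
      have hle : b + (K*L+1) ≤ g w := by omega
      have := mono b (g w) hle
      rw [hgf] at this
      linarith [hw.2]
  have inj : Set.InjOn g (Finset.Icc (f a) (f b)) := by
    intro w1 _ w2 _ h
    have := congrArg f h
    rwa [hgf, hgf] at this
  have hcard := Finset.card_le_card_of_injOn g key inj
  rw [Int.card_Icc, Int.card_Icc] at hcard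
  set M := K*L with hM
  omega

/-- Main auxiliary lemma: the coarsely increasing case. -/
private lemma aux_main' (f g : ℤ → ℤ)
    (hfg : Function.LeftInverse g f) (hgf : Function.RightInverse g f)
    (K L : ℤ)
    (hLip : ∀ x y : ℤ, |f x - f y| ≤ K * |x - y|)
    (hLipInv : ∀ u v : ℤ, |g u - g v| ≤ L * |u - v|)
    (hK : 1 ≤ K) (hL : 1 ≤ L)
    (hpos : f 0 < f (K*L+1)) :
    ∃ c : ℤ, ∀ x : ℤ, |f x - (x + c)| ≤ K * L := by
  have hKL : 1 ≤ K*L := by nlinarith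
  have monoF : ∀ x y : ℤ, x + (K*L+1) ≤ y → f x < f y := by
    refine coarse_mono' f g K L hfg hLip hLipInv hK hL ⟨0, ?_⟩
    rw [zero_add]; exact hpos
  have monoG : ∀ u v : ℤ, u + (L*K+1) ≤ v → g u < g v := by
    have hX1 : (0:ℤ) + (K*L+1) ≤ L*(K*L+1) := by nlinarith
    have h2 : f 0 < f (L*(K*L+1)) := monoF 0 (L*(K*L+1)) hX1
    have h3 : |(L*(K*L+1)) - 0| ≤ L * |f (L*(K*L+1)) - f 0| := by
      have := hLipInv (f (L*(K*L+1))) (f 0)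
      rwa [hfg, hfg] at this
    have h3' : L*(K*L+1) ≤ L * (f (L*(K*L+1)) - f 0) := by
      rw [sub_zero, abs_of_nonneg (by nlinarith : (0:ℤ) ≤ L*(K*L+1)),
        abs_of_nonneg (by linarith : (0:ℤ) ≤ f (L*(K*L+1)) - f 0)] at h3
      exact h3
    have h4 : f 0 + (L*K+1) ≤ f (L*(K*L+1)) := by nlinarith
    have i := iff_top' g f L K hgf hLipInv hLip hL hK (f 0) (f (L*(K*L+1))) h4
    have base : g (f 0) < g (f (L*(K*L+1))) := by
      rw [hfg, hfg]; nlinarith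
    exact coarse_mono' g f L K hgf hLipInv hLip hL hK ⟨f 0, i.mp base⟩
  have Ef := count' f g K L hgf monoF hK hL
  have Eg := count' g f L K hfg monoG hL hK
  have osc : ∀ x y : ℤ, f y - y - (f x - x) ≤ 2*(K*L) := by
    intro x y
    rcases le_total x y with hxy | hxy
    · rcases le_or_gt (f x) (f y) with hf | hf
      · have := Ef x y hf; linarith
      · linarith
    · have h1 : g (f y) ≤ g (f x) := by rw [hfg, hfg]; exact hxy
      have h2 := Eg (f y) (f x) h1
      rw [hfg, hfg] at h2
      have e : L*K = K*L := mul_comm L K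
      rw [e] at h2
      linarith
  have bdd : ∃ b : ℤ, ∀ z : ℤ, (∃ x : ℤ, f x - x = z) → b ≤ z := by
    refine ⟨f 0 - 2*(K*L), ?_⟩
    rintro z ⟨x, rfl⟩
    have := osc x 0
    simp only [sub_zero] at this
    linarith
  obtain ⟨m, ⟨x0, hx0⟩, hmin⟩ :=
    Int.exists_least_of_bdd (P := fun z => ∃ x : ℤ, f x - x = z) bdd ⟨f 0 - 0, 0, rfl⟩
  refine ⟨m + K*L, fun x => ?_⟩
  have hlow : m ≤ f x - x := hmin _ ⟨x, rfl⟩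
  have hup : f x - x - m ≤ 2*(K*L) := by
    have := osc x0 x
    rw [hx0] at this
    linarith
  rw [abs_le]
  constructor <;> linarith

/-- A bi-Lipschitz bijection of ℤ is within K·L of a map x ↦ ε·x + c with ε = ±1. -/
theorem biLipschitz_bijection_int_close_to_isometry
    (f g : ℤ → ℤ) (hfg : Function.LeftInverse g f) (hgf : Function.RightInverse g f)
    (K L : ℤ)
    (hLip : ∀ x y : ℤ, |f x - f y| ≤ K * |x - y|)
    (hLipInv : ∀ u v : ℤ, |g u - g v| ≤ L * |u - v|) :
    ∃ (ε c : ℤ), (ε = 1 ∨ ε = -1) ∧ ∀ x : ℤ, |f x - (ε * x + c)| ≤ K * L := by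
  have hinjf : Function.Injective f := hfg.injective
  have hinjg : Function.Injective g := hgf.injective
  have hK : 1 ≤ K := by
    have h1 := hLip 1 0
    have h2 : f 1 ≠ f 0 := fun h => one_ne_zero (hinjf h)
    have h3 : 1 ≤ |f 1 - f 0| := Int.one_le_abs (sub_ne_zero.mpr h2)
    simpa using le_trans h3 h1
  have hL : 1 ≤ L := by
    have h1 := hLipInv 1 0
    have h2 : g 1 ≠ g 0 := fun h => one_ne_zero (hinjg h)
    have h3 : 1 ≤ |g 1 - g 0| := Int.one_le_abs (sub_ne_zero.mpr h2)
    simpa using le_trans h3 h1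
  have hKL : 1 ≤ K*L := by nlinarith
  by_cases hc : f 0 < f (K*L+1)
  · obtain ⟨c, hcc⟩ := aux_main' f g hfg hgf K L hLip hLipInv hK hL hc
    exact ⟨1, c, Or.inl rfl, fun x => by simpa using hcc x⟩
  · have hne : f (K*L+1) ≠ f 0 := fun h => by
      have := hinjf h; omega
    have hc' : f (K*L+1) < f 0 := lt_of_le_of_ne (not_lt.mp hc) hne
    set f' : ℤ → ℤ := fun x => -f x with hf'
    set g' : ℤ → ℤ := fun u => g (-u) with hg'
    have hfg' : Function.LeftInverse g' f' := by
      intro x; simp only [hf', hg', neg_neg]; exact hfg x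
    have hgf' : Function.RightInverse g' f' := by
      intro u; simp only [hf', hg']; rw [hgf]; ring
    have hLip' : ∀ x y : ℤ, |f' x - f' y| ≤ K * |x - y| := by
      intro x y
      have e : f' x - f' y = -(f x - f y) := by simp [hf']; ring
      rw [e, abs_neg]; exact hLip x y
    have hLipInv' : ∀ u v : ℤ, |g' u - g' v| ≤ L * |u - v| := by
      intro u v
      have h1 := hLipInv (-u) (-v)
      have e : |(-u) - (-v)| = |u - v| := by rw [abs_sub_comm]; congr 1; ring
      rw [e] at h1
      exact h1
    have hpos' : f' 0 < f' (K*L+1) := by simp only [hf']; omega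
    obtain ⟨c, hcc⟩ := aux_main' f' g' hfg' hgf' K L hLip' hLipInv' hK hL hpos'
    refine ⟨-1, -c, Or.inr rfl, fun x => ?_⟩
    have h1 := hcc x
    have e : f x - (-1 * x + -c) = -(f' x - (x + c)) := by simp [hf']; ring
    rw [e, abs_neg]
    exact h1
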